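/- Let X be a real-valued random variable (integrable with integrable square) and α ∈ (0,1). The function m ↦ E[|α - 1_{X - m < 0}| (X - m)²] is strictly convex in m and has a unique minimizer (the α-expectile of X). -/

import Mathlib

open MeasureTheory

lemma aux_maxsq_convex : ConvexOn ℝ Set.univ fun x : ℝ => max x 0 ^ 2 := by
  have h : ConvexOn ℝ Set.univ fun x : ℝ => max x 0 :=
    (convexOn_id convex_univ).sup (convexOn_const 0 convex_univ)
  have h2 := h.pow (fun x _ => le_max_right x 0) 2
  exact h2

lemma aux_minsq_convex : ConvexOn ℝ Set.univ fun x : ℝ => min x 0 ^ 2 := by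
  have hneg : ConvexOn ℝ Set.univ fun x : ℝ => -x :=
    ⟨convex_univ, fun x _ y _ a b _ _ _ => by
      simp only [smul_eq_mul]; exact le_of_eq (by ring)⟩
  have h : ConvexOn ℝ Set.univ fun x : ℝ => max (-x) 0 :=
    hneg.sup (convexOn_const 0 convex_univ)
  have h2 := h.pow (fun x _ => le_max_right (-x) 0) 2
  have heq : (fun x : ℝ => min x 0 ^ 2) = fun x : ℝ => max (-x) 0 ^ 2 := by
    funext x
    rcases le_or_gt x 0 with hx | hx
    · rw [min_eq_left hx, max_eq_left (by linarith)]; ring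
    · rw [min_eq_right hx.le, max_eq_right (by linarith : -x ≤ 0)]
  rw [heq]
  exact h2

lemma aux_pointwise (α : ℝ) (hα0 : 0 < α) (hα1 : α < 1) (x : ℝ) :
    |α - (if x < 0 then 1 else 0)| * x ^ 2
      = α * max x 0 ^ 2 + (1 - α) * min x 0 ^ 2 := by
  rcases lt_or_ge x 0 with h | h
  · rw [if_pos h, max_eq_right h.le, min_eq_left h.le, abs_of_nonpos (by linarith)]
    ring
  · rw [if_neg (not_lt.2 h), max_eq_left h, min_eq_right h, sub_zero, abs_of_pos hα0]
    ring

lemma aux_L_nonneg (α : ℝ) (hα0 : 0 < α) (hα1 : α < 1) (u : ℝ) :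
    0 ≤ α * max u 0 ^ 2 + (1 - α) * min u 0 ^ 2 := by
  have h1 : 0 ≤ α * max u 0 ^ 2 := mul_nonneg hα0.le (sq_nonneg _)
  have h2 : 0 ≤ (1 - α) * min u 0 ^ 2 := mul_nonneg (by linarith) (sq_nonneg _)
  linarith

lemma aux_L_le (α : ℝ) (hα0 : 0 < α) (hα1 : α < 1) (u : ℝ) :
    α * max u 0 ^ 2 + (1 - α) * min u 0 ^ 2 ≤ u ^ 2 := by
  rcases le_or_gt u 0 with h | h
  · rw [min_eq_left h, max_eq_right h]
    nlinarith [sq_nonneg u]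
  · rw [min_eq_right h.le, max_eq_left h.le]
    nlinarith [sq_nonneg u]

lemma aux_L_lower (α : ℝ) (hα0 : 0 < α) (hα1 : α < 1) (u : ℝ) :
    min α (1 - α) * u ^ 2 ≤ α * max u 0 ^ 2 + (1 - α) * min u 0 ^ 2 := by
  rcases le_or_gt u 0 with h | h
  · rw [min_eq_left h, max_eq_right h]
    nlinarith [sq_nonneg u, min_le_right α (1 - α)]
  · rw [min_eq_right h.le, max_eq_left h.le]
    nlinarith [sq_nonneg u, min_le_left α (1 - α)]

lemma aux_strictConvex (α : ℝ) (hα0 : 0 < α) (hα1 : α < 1) :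
    StrictConvexOn ℝ Set.univ fun x : ℝ =>
      α * max x 0 ^ 2 + (1 - α) * min x 0 ^ 2 := by
  set c := min α (1 - α) with hc
  have hcpos : 0 < c := lt_min hα0 (by linarith)
  have hca : c ≤ α := min_le_left _ _
  have hcb : c ≤ 1 - α := min_le_right _ _
  have hsq : StrictConvexOn ℝ Set.univ fun x : ℝ => x ^ 2 :=
    Even.strictConvexOn_pow (by norm_num) (by norm_num)
  have hcsq : StrictConvexOn ℝ Set.univ fun x : ℝ => c * x ^ 2 := by
    refine ⟨convex_univ, fun x hx y hy hxy a b ha hb hab => ?_⟩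
    have := hsq.2 hx hy hxy ha hb hab
    simp only [smul_eq_mul] at this ⊢
    nlinarith
  have hrest : ConvexOn ℝ Set.univ fun x : ℝ =>
      (α - c) * max x 0 ^ 2 + ((1 - α) - c) * min x 0 ^ 2 := by
    have h1 := aux_maxsq_convex.smul (c := α - c) (by linarith)
    have h2 := aux_minsq_convex.smul (c := (1 - α) - c) (by linarith)
    exact h1.add h2
  have key := hcsq.add_convexOn hrest
  have heq : (fun x : ℝ => α * max x 0 ^ 2 + (1 - α) * min x 0 ^ 2)
      = fun x : ℝ => c * x ^ 2 + ((α - c) * max x 0 ^ 2 + ((1 - α) - c) * min x 0 ^ 2) := by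
    funext x
    have hmm : max x 0 ^ 2 + min x 0 ^ 2 = x ^ 2 := by
      rcases le_or_gt x 0 with h | h
      · rw [min_eq_left h, max_eq_right h]; ring
      · rw [min_eq_right h.le, max_eq_left h.le]; ring
    nlinarith [hmm]
  rw [heq]
  exact key

theorem expectile_loss_strictConvex_unique_min
    {Ω : Type*} [MeasurableSpace Ω] (μ : Measure Ω) [IsProbabilityMeasure μ]
    (X : Ω → ℝ) (hX : Integrable X μ) (hX2 : Integrable (fun ω => X ω ^ 2) μ)
    (α : ℝ) (hα : α ∈ Set.Ioo (0 : ℝ) 1) :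
    StrictConvexOn ℝ Set.univ
        (fun m : ℝ => ∫ ω, |α - (if X ω - m < 0 then 1 else 0)| * (X ω - m) ^ 2 ∂μ) ∧
      ∃! m : ℝ, ∀ m' : ℝ,
        (∫ ω, |α - (if X ω - m < 0 then 1 else 0)| * (X ω - m) ^ 2 ∂μ) ≤
          ∫ ω, |α - (if X ω - m' < 0 then 1 else 0)| * (X ω - m') ^ 2 ∂μ := by
  obtain ⟨hα0, hα1⟩ := hα
  simp only [aux_pointwise α hα0 hα1]
  set L : ℝ → ℝ := fun x => α * max x 0 ^ 2 + (1 - α) * min x 0 ^ 2 with hLdef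
  set g : ℝ → ℝ := fun m => ∫ ω, L (X ω - m) ∂μ with hgdef
  -- integrability facts
  have hXm : ∀ m : ℝ, Integrable (fun ω => (X ω - m) ^ 2) μ := by
    intro m
    have heq : (fun ω => (X ω - m) ^ 2)
        = fun ω => X ω ^ 2 - 2 * m * X ω + m ^ 2 := by funext ω; ring
    rw [heq]
    exact (hX2.sub (hX.const_mul (2 * m))).add (integrable_const _)
  have hLcont : Continuous L := by
    apply Continuous.add
    · exact continuous_const.mul ((continuous_id.max continuous_const).pow 2)
    · exact continuous_const.mul ((continuous_id.min continuous_const).pow 2)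
  have hInt : ∀ m : ℝ, Integrable (fun ω => L (X ω - m)) μ := by
    intro m
    refine (hXm m).mono' ?_ ?_
    · exact hLcont.comp_aestronglyMeasurable
        (hX.aestronglyMeasurable.sub aestronglyMeasurable_const)
    · filter_upwards with ω
      rw [Real.norm_eq_abs, abs_of_nonneg (aux_L_nonneg α hα0 hα1 _)]
      exact aux_L_le α hα0 hα1 _
  -- strict convexity of g
  have hLstrict := aux_strictConvex α hα0 hα1
  have hstrict : StrictConvexOn ℝ Set.univ g := by
    refine ⟨convex_univ, fun m₁ _ m₂ _ hne a b ha hb hab => ?_⟩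
    simp only [smul_eq_mul]
    have hpt : ∀ ω, L (X ω - (a * m₁ + b * m₂))
        < a * L (X ω - m₁) + b * L (X ω - m₂) := by
      intro ω
      have h1 : X ω - (a * m₁ + b * m₂) = a • (X ω - m₁) + b • (X ω - m₂) := by
        simp only [smul_eq_mul]; rw [show a = 1 - b by linarith]; ring
      have hne' : X ω - m₁ ≠ X ω - m₂ := fun h => hne (by linarith)
      have := hLstrict.2 (Set.mem_univ (X ω - m₁)) (Set.mem_univ (X ω - m₂)) hne' ha hb hab
      rw [h1]
      simpa [smul_eq_mul] using this
    have hcomb : Integrable (fun ω => a * L (X ω - m₁) + b * L (X ω - m₂)) μ :=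
      ((hInt m₁).const_mul a).add ((hInt m₂).const_mul b)
    have hdiff : Integrable (fun ω =>
        (a * L (X ω - m₁) + b * L (X ω - m₂)) - L (X ω - (a * m₁ + b * m₂))) μ :=
      hcomb.sub (hInt _)
    have hpos : 0 < ∫ ω,
        ((a * L (X ω - m₁) + b * L (X ω - m₂)) - L (X ω - (a * m₁ + b * m₂))) ∂μ := by
      rw [integral_pos_iff_support_of_nonneg_ae
        (ae_of_all _ fun ω => sub_nonneg.2 (hpt ω).le) hdiff]
      have hsup : (Function.support fun ω =>
          (a * L (X ω - m₁) + b * L (X ω - m₂)) - L (X ω - (a * m₁ + b * m₂)))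
          = Set.univ :=
        Set.eq_univ_of_forall fun ω => (sub_pos.2 (hpt ω)).ne'
      rw [hsup]
      simp
    rw [integral_sub hcomb (hInt _), sub_pos,
      integral_add ((hInt m₁).const_mul a) ((hInt m₂).const_mul b),
      integral_const_mul, integral_const_mul] at hpos
    exact hpos
  refine ⟨hstrict, ?_⟩
  -- continuity
  have hcont : Continuous g := by
    exact continuousOn_univ.mp
      (hstrict.convexOn.continuousOn isOpen_univ)
  -- lower bound (coercivity)
  obtain ⟨c, hcdef⟩ : ∃ c : ℝ, c = min α (1 - α) := ⟨_, rfl⟩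
  have hcpos : 0 < c := hcdef ▸ lt_min hα0 (by linarith)
  obtain ⟨A, hAdef⟩ : ∃ A : ℝ, A = ∫ ω, X ω ^ 2 ∂μ := ⟨_, rfl⟩
  obtain ⟨B, hBdef⟩ : ∃ B : ℝ, B = ∫ ω, X ω ∂μ := ⟨_, rfl⟩
  have hA : 0 ≤ A := hAdef ▸ integral_nonneg fun ω => sq_nonneg _
  have hsqint : ∀ m : ℝ, ∫ ω, (X ω - m) ^ 2 ∂μ = A - 2 * m * B + m ^ 2 := by
    intro m
    have heq : (fun ω => (X ω - m) ^ 2)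
        = fun ω => (X ω ^ 2 - 2 * m * X ω) + m ^ 2 := by funext ω; ring
    have h1 : Integrable (fun ω => X ω ^ 2 - 2 * m * X ω) μ :=
      hX2.sub (hX.const_mul (2 * m))
    rw [heq, integral_add h1 (integrable_const _),
      integral_sub hX2 (hX.const_mul (2 * m)), integral_const_mul, integral_const]
    simp [hAdef, hBdef]
  have hgl : ∀ m : ℝ, c * (A - 2 * m * B + m ^ 2) ≤ g m := by
    intro m
    rw [← hsqint m, ← integral_const_mul]
    refine integral_mono ((hXm m).const_mul c) (hInt m)
      fun ω => ?_
    rw [hcdef]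
    exact aux_L_lower α hα0 hα1 (X ω - m)
  obtain ⟨R, hRdef⟩ : ∃ R : ℝ, R = 4 * |B| + 2 * (|g 0| + 1) / c + 1 := ⟨_, rfl⟩
  have hRpos : 0 < R := by rw [hRdef]; positivity
  have hcoer : ∀ m : ℝ, R ≤ |m| → g 0 < g m := by
    intro m hm
    have habs : 2 * (|g 0| + 1) / c ≤ |m| := by
      have : (0:ℝ) ≤ 4 * |B| := by positivity
      linarith
    have hdiv : c * (2 * (|g 0| + 1) / c) = 2 * (|g 0| + 1) := by
      field_simp
    have hmb : m * B ≤ |m| * |B| := by rw [← abs_mul]; exact le_abs_self _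
    have h2 : A - 2 * m * B + m ^ 2 ≥ |m| * (|m| - 2 * |B|) := by
      nlinarith [sq_abs m, hmb, hA]
    have h3 : |m| - 2 * |B| ≥ |m| / 2 := by
      have : 4 * |B| ≤ |m| := by
        have h0 : (0:ℝ) ≤ 2 * (|g 0| + 1) / c := by positivity
        linarith
      linarith
    have h4 : |m| * (|m| - 2 * |B|) ≥ |m| * (|m| / 2) := by
      have := abs_nonneg m
      nlinarith
    have h5 : |m| * (|m| / 2) ≥ |m| / 2 := by
      have h1m : (1:ℝ) ≤ |m| := by
        have h0 : (0:ℝ) ≤ 4 * |B| := by positivity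
        have h0' : (0:ℝ) ≤ 2 * (|g 0| + 1) / c := by positivity
        linarith
      nlinarith
    have h6 : c * (A - 2 * m * B + m ^ 2) ≥ c * (|m| / 2) := by
      nlinarith
    have h7 : c * (|m| / 2) ≥ |g 0| + 1 := by
      have := mul_le_mul_of_nonneg_left habs hcpos.le
      rw [hdiv] at this
      linarith
    have := hgl m
    have h8 : |g 0| + 1 ≤ g m := by linarith
    linarith [le_abs_self (g 0)]
  -- existence of minimizer on compact interval
  obtain ⟨m₀, hm₀mem, hm₀min⟩ := (isCompact_Icc (a := -R) (b := R)).exists_isMinOn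
    ⟨0, by constructor <;> linarith⟩ hcont.continuousOn
  have h0mem : (0:ℝ) ∈ Set.Icc (-R) R := by constructor <;> linarith
  have hglobal : ∀ m' : ℝ, g m₀ ≤ g m' := by
    intro m'
    by_cases hm' : m' ∈ Set.Icc (-R) R
    · exact hm₀min hm'
    · have hRm : R ≤ |m'| := by
        rcases not_and_or.mp hm' with h | h
        · push_neg at h
          rw [abs_of_nonpos (by linarith)]; linarith
        · push_neg at h
          rw [abs_of_pos (by linarith)]; linarith
      exact le_trans (hm₀min h0mem) (hcoer m' hRm).le
  refine ⟨m₀, hglobal, ?_⟩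
  intro y hy
  exact hstrict.eq_of_isMinOn (isMinOn_iff.mpr fun z _ => hy z)
    (isMinOn_iff.mpr fun z _ => hglobal z) (Set.mem_univ y) (Set.mem_univ m₀)
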